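/- For the Poisson bi-vector P on ℝ³ with P^{12} = x²y, P^{13} = -x(xz+1), P^{23} = xyz, the first Kontsevich tetrahedral bi-vector Γ₁(P), defined componentwise by Γ₁(P)^{ij} = ∑ (∂³P^{ij}/∂x^k∂x^ℓ∂x^m)(∂P^{kk'}/∂x^{ℓ'})(∂P^{ℓℓ'}/∂x^{m'})(∂P^{mm'}/∂x^{k'}) (sum over all repeated indices from 1 to 3), has components Γ₁(P)^{12} = -6x⁵y, Γ₁(P)^{13} = -6x⁴(xz+1), Γ₁(P)^{23} = -6x³y. -/

import Mathlib

/-- Partial derivative in the `i`-th coordinate direction on `ℝ³ = Fin 3 → ℝ`. -/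
noncomputable def pd (i : Fin 3) (f : (Fin 3 → ℝ) → ℝ) : (Fin 3 → ℝ) → ℝ :=
  fun x => fderiv ℝ f x (Pi.single i 1)

/-- The specific bi-vector on `ℝ³` with `P^{12} = x²y`, `P^{13} = -x(xz+1)`,
`P^{23} = xyz`. -/
noncomputable def Pmat : (Fin 3 → ℝ) → Matrix (Fin 3) (Fin 3) ℝ := fun x =>
  !![0, x 0 ^ 2 * x 1, -(x 0 * (x 0 * x 2 + 1));
     -(x 0 ^ 2 * x 1), 0, x 0 * x 1 * x 2;
     x 0 * (x 0 * x 2 + 1), -(x 0 * x 1 * x 2), 0]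

/-- The entries of `Pmat` as functions on `ℝ³`. -/
noncomputable def Pf (i j : Fin 3) : (Fin 3 → ℝ) → ℝ := fun x => Pmat x i j

/-- The first Kontsevich tetrahedral bi-vector `Γ₁(P)`,
`Γ₁(P)^{ij} = ∑ ∂³P^{ij}/∂x^k∂x^ℓ∂x^m · ∂P^{kk'}/∂x^{ℓ'} · ∂P^{ℓℓ'}/∂x^{m'} · ∂P^{mm'}/∂x^{k'}`. -/
noncomputable def Γ₁ (i j : Fin 3) : (Fin 3 → ℝ) → ℝ := fun x =>
  ∑ k, ∑ l, ∑ m, ∑ k', ∑ l', ∑ m',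
    pd k (pd l (pd m (Pf i j))) x * pd l' (Pf k k') x * pd m' (Pf l l') x * pd k' (Pf m m') x

open ContinuousLinearMap in
lemma hasFDerivAt_coord_pow (i : Fin 3) (n : ℕ) (x : Fin 3 → ℝ) :
    HasFDerivAt (fun y : Fin 3 → ℝ => y i ^ n)
      (((n : ℝ) * x i ^ (n - 1)) • ContinuousLinearMap.proj (R := ℝ) (φ := fun _ : Fin 3 => ℝ) i) x := by
  induction n with
  | zero =>
      simp only [pow_zero, Nat.cast_zero, zero_mul, zero_smul]
      exact hasFDerivAt_const 1 x
  | succ n ih =>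
      have h := ih.fun_mul (hasFDerivAt_apply i x)
      have : (fun y : Fin 3 → ℝ => y i ^ n * y i) = fun y : Fin 3 → ℝ => y i ^ (n + 1) := by
        funext y; rw [← pow_succ]
      rw [this] at h
      refine h.congr_fderiv (Eq.symm ?_)
      ext v
      simp only [ContinuousLinearMap.add_apply, ContinuousLinearMap.smul_apply,
        ContinuousLinearMap.proj_apply, smul_eq_mul, Nat.add_sub_cancel]
      rcases Nat.eq_zero_or_pos n with hn | hn
      · subst hn; simp
      · have hx : x i * x i ^ (n - 1) = x i ^ n := by
          rw [← pow_succ', Nat.sub_add_cancel hn]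
        push_cast
        linear_combination (-(n : ℝ) * v i) * hx

/-- monomial `c * x0^a * x1^b * x2^d` -/
def mon (c : ℝ) (a b d : ℕ) : (Fin 3 → ℝ) → ℝ := fun x => c * x 0 ^ a * x 1 ^ b * x 2 ^ d

lemma hasFDerivAt_mon (c : ℝ) (a b d : ℕ) (x : Fin 3 → ℝ) :
    HasFDerivAt (mon c a b d)
      ((c * a * x 0 ^ (a - 1) * x 1 ^ b * x 2 ^ d) • ContinuousLinearMap.proj (R := ℝ) (φ := fun _ : Fin 3 => ℝ) 0 +
       ((c * x 0 ^ a * b * x 1 ^ (b - 1) * x 2 ^ d) • ContinuousLinearMap.proj (R := ℝ) (φ := fun _ : Fin 3 => ℝ) 1 +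
        (c * x 0 ^ a * x 1 ^ b * d * x 2 ^ (d - 1)) • ContinuousLinearMap.proj (R := ℝ) (φ := fun _ : Fin 3 => ℝ) 2)) x := by
  have h := (((hasFDerivAt_coord_pow 0 a x).const_mul c).fun_mul
      (hasFDerivAt_coord_pow 1 b x)).fun_mul (hasFDerivAt_coord_pow 2 d x)
  refine h.congr_fderiv (Eq.symm ?_)
  ext v
  simp only [ContinuousLinearMap.add_apply, ContinuousLinearMap.smul_apply,
    ContinuousLinearMap.proj_apply, smul_eq_mul]
  ring

lemma pd_mon (k : Fin 3) (c : ℝ) (a b d : ℕ) :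
    pd k (mon c a b d) =
      if k = 0 then mon (c * a) (a - 1) b d
      else if k = 1 then mon (c * b) a (b - 1) d
      else mon (c * d) a b (d - 1) := by
  funext x
  rw [pd]
  show fderiv ℝ (mon c a b d) x (Pi.single k 1) = _
  rw [(hasFDerivAt_mon c a b d x).fderiv]
  fin_cases k <;>
    simp [mon, ContinuousLinearMap.add_apply, ContinuousLinearMap.smul_apply,
      ContinuousLinearMap.proj_apply, Pi.single_apply] <;> ring_nf <;> tauto

lemma pd_mon₀ (c : ℝ) (a b d : ℕ) : pd 0 (mon c a b d) = mon (c * a) (a - 1) b d := by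
  rw [pd_mon]; simp

lemma pd_mon₁ (c : ℝ) (a b d : ℕ) : pd 1 (mon c a b d) = mon (c * b) a (b - 1) d := by
  rw [pd_mon]; simp

lemma pd_mon₂ (c : ℝ) (a b d : ℕ) : pd 2 (mon c a b d) = mon (c * d) a b (d - 1) := by
  rw [pd_mon]; simp

lemma mon_differentiable (c : ℝ) (a b d : ℕ) : Differentiable ℝ (mon c a b d) :=
  fun x => (hasFDerivAt_mon c a b d x).differentiableAt

lemma pd_add_mon (k : Fin 3) (c₁ : ℝ) (a₁ b₁ d₁ : ℕ) (c₂ : ℝ) (a₂ b₂ d₂ : ℕ) :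
    pd k (fun x => mon c₁ a₁ b₁ d₁ x + mon c₂ a₂ b₂ d₂ x) =
      fun x => pd k (mon c₁ a₁ b₁ d₁) x + pd k (mon c₂ a₂ b₂ d₂) x := by
  funext x
  show fderiv ℝ _ x (Pi.single k 1) = _
  rw [fderiv_fun_add (mon_differentiable c₁ a₁ b₁ d₁ x) (mon_differentiable c₂ a₂ b₂ d₂ x)]
  rfl

lemma Pf00 : Pf 0 0 = mon 0 0 0 0 := by funext x; simp [Pf, Pmat, mon]
lemma Pf01 : Pf 0 1 = mon 1 2 1 0 := by funext x; simp [Pf, Pmat, mon]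
lemma Pf02 : Pf 0 2 = fun x => mon (-1) 2 0 1 x + mon (-1) 1 0 0 x := by
  funext x; simp [Pf, Pmat, mon]; ring
lemma Pf10 : Pf 1 0 = mon (-1) 2 1 0 := by funext x; simp [Pf, Pmat, mon]
lemma Pf11 : Pf 1 1 = mon 0 0 0 0 := by funext x; simp [Pf, Pmat, mon]
lemma Pf12 : Pf 1 2 = mon 1 1 1 1 := by funext x; simp [Pf, Pmat, mon]
lemma Pf20 : Pf 2 0 = fun x => mon 1 2 0 1 x + mon 1 1 0 0 x := by
  funext x; simp [Pf, Pmat, mon]; ring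
lemma Pf21 : Pf 2 1 = mon (-1) 1 1 1 := by funext x; simp [Pf, Pmat, mon]
lemma Pf22 : Pf 2 2 = mon 0 0 0 0 := by funext x; simp [Pf, Pmat, mon]

set_option maxHeartbeats 4000000 in
theorem Γ₁_components :
    ∀ x : Fin 3 → ℝ,
      Γ₁ 0 1 x = -6 * x 0 ^ 5 * x 1 ∧
      Γ₁ 0 2 x = -6 * x 0 ^ 4 * (x 0 * x 2 + 1) ∧
      Γ₁ 1 2 x = -6 * x 0 ^ 3 * x 1 := by
  intro x
  refine ⟨?_, ?_, ?_⟩ <;>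
  · simp only [Γ₁, Fin.sum_univ_three, Pf00, Pf01, Pf02, Pf10, Pf11, Pf12, Pf20, Pf21, Pf22,
      pd_add_mon, pd_mon₀, pd_mon₁, pd_mon₂]
    norm_num [mon]
    ring
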